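/- Let (Ω, P) be a probability space, σ > 0, and ε : Ω → ℝ a random variable with law N(0, σ²). Let μ ∈ ℝ and z = μ + ε. Let ẑ, t̂ : Ω → ℝ be random variables, Ω₀ a measurable event, and t > 0, Δ constants with 0 ≤ Δ ≤ t, such that on Ω₀ one has |ẑ − z| + |t̂ − t| ≤ Δ and t̂ > t + |ẑ − z|. Let s_u(x) = sgn(x)(|x| − u)₊ be the soft-threshold map. Then E[(s_{t̂}(ẑ) − μ)² 1_{Ω₀}] ≤ min{ 2E(ε − t)₊² + μ², σ² + (t + Δ)² } + Δ( 2E(ε − t)₊ + 3Δ P(ε > t) ), and this in turn is at most min{ μ², σ² + (t + Δ)² } + φ(t/σ)( 4σ⁵/t³ + 2Δσ³/t² + 3Δ²σ/t ), where φ(x) = e^{−x²/2}/√(2π). -/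

import Mathlib

open MeasureTheory ProbabilityTheory Real Set Filter Topology
open scoped NNReal ENNReal

noncomputable def gv (σ : ℝ) : ℝ≥0 := ⟨σ ^ 2, sq_nonneg σ⟩
noncomputable def gp (σ : ℝ) (x : ℝ) : ℝ := gaussianPDFReal 0 (gv σ) x

lemma gv_coe (σ : ℝ) : ((gv σ : ℝ≥0) : ℝ) = σ ^ 2 := rfl

lemma gv_ne {σ : ℝ} (hσ : 0 < σ) : gv σ ≠ 0 := by
  intro h
  have h2 : ((gv σ : ℝ≥0) : ℝ) = ((0 : ℝ≥0) : ℝ) := congrArg _ h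
  rw [gv_coe, NNReal.coe_zero] at h2
  exact pow_ne_zero 2 hσ.ne' h2

lemma gp_eq (σ : ℝ) : gp σ = fun x => (Real.sqrt (2 * π * σ ^ 2))⁻¹ *
    Real.exp (-x ^ 2 / (2 * σ ^ 2)) := by
  funext x
  simp only [gp, gaussianPDFReal, gv_coe, sub_zero]

lemma gp_nonneg (σ : ℝ) (x : ℝ) : 0 ≤ gp σ x := gaussianPDFReal_nonneg _ _ _

lemma gp_meas (σ : ℝ) : Measurable (gp σ) := measurable_gaussianPDFReal _ _

lemma hasDerivAt_gp {σ : ℝ} (hσ : 0 < σ) (x : ℝ) :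
    HasDerivAt (gp σ) (-(x / σ ^ 2) * gp σ x) x := by
  have h1 : HasDerivAt (fun y : ℝ => -y ^ 2 / (2 * σ ^ 2)) (-(2 * x ^ 1) / (2 * σ ^ 2)) x :=
    ((hasDerivAt_pow 2 x).neg).div_const _
  have h2 := (h1.exp).const_mul (Real.sqrt (2 * π * σ ^ 2))⁻¹
  rw [gp_eq]
  show HasDerivAt _ (-(x / σ ^ 2) * ((Real.sqrt (2 * π * σ ^ 2))⁻¹ *
    Real.exp (-x ^ 2 / (2 * σ ^ 2)))) x
  refine h2.congr_deriv ?_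
  have hσ2 : (σ:ℝ) ^ 2 ≠ 0 := by positivity
  field_simp

lemma tendsto_pow_gp_atTop {σ : ℝ} (hσ : 0 < σ) (k : ℕ) :
    Tendsto (fun x => x ^ k * gp σ x) atTop (𝓝 0) := by
  have hb : (0:ℝ) < (2 * σ ^ 2)⁻¹ := by positivity
  have hhalf : Tendsto (fun x : ℝ => Real.exp (-(1/2) * x)) atTop (𝓝 0) := by
    apply Real.tendsto_exp_atBot.comp
    exact Tendsto.const_mul_atTop_of_neg (by norm_num) tendsto_id
  have h1 : Tendsto (fun x : ℝ => x ^ ((k : ℕ) : ℝ) * Real.exp (-(2 * σ ^ 2)⁻¹ * x ^ 2))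
      atTop (𝓝 0) :=
    (rpow_mul_exp_neg_mul_sq_isLittleO_exp_neg hb _).isBigO.trans_tendsto hhalf
  have h2 : Tendsto (fun x : ℝ => x ^ k * Real.exp (-x ^ 2 / (2 * σ ^ 2))) atTop (𝓝 0) := by
    refine h1.congr fun x => ?_
    rw [Real.rpow_natCast]
    congr 1
    congr 1
    field_simp
  have h3 := h2.const_mul (Real.sqrt (2 * π * σ ^ 2))⁻¹
  rw [mul_zero] at h3
  rw [gp_eq]
  refine h3.congr fun x => ?_
  ring

lemma gp_neg (σ : ℝ) (x : ℝ) : gp σ (-x) = gp σ x := by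
  rw [gp_eq]
  norm_num

lemma tendsto_pow_gp_atBot {σ : ℝ} (hσ : 0 < σ) (k : ℕ) :
    Tendsto (fun x => x ^ k * gp σ x) atBot (𝓝 0) := by
  have h1 := (tendsto_pow_gp_atTop hσ k).comp tendsto_neg_atBot_atTop
  have h2 : ((fun x : ℝ => x ^ k * gp σ x) ∘ Neg.neg) = fun x : ℝ => (-1) ^ k * (x ^ k * gp σ x) := by
    funext x
    show (-x) ^ k * gp σ (-x) = _
    rw [gp_neg, neg_pow]
    ring
  rw [h2] at h1
  have h3 := h1.const_mul ((-1 : ℝ) ^ k)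
  rw [mul_zero] at h3
  refine h3.congr fun x => ?_
  rw [← mul_assoc, ← mul_pow]
  norm_num

lemma integrable_abs_pow_gp {σ : ℝ} (hσ : 0 < σ) (k : ℕ) :
    Integrable (fun x => |x| ^ k * gp σ x) := by
  have hb : (0:ℝ) < (4 * σ ^ 2)⁻¹ := by positivity
  set c := (Real.sqrt (2 * π * σ ^ 2))⁻¹ with hc
  have hc0 : 0 ≤ c := by positivity
  refine Integrable.mono' (g := fun x => ((Nat.factorial k : ℝ) * c * Real.exp (σ ^ 2)) *
      Real.exp (-(4 * σ ^ 2)⁻¹ * x ^ 2)) ((integrable_exp_neg_mul_sq hb).const_mul _)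
    ((measurable_abs.pow_const k).mul (gp_meas σ)).aestronglyMeasurable
    (ae_of_all _ fun x => ?_)
  have hk : (0:ℝ) < (Nat.factorial k : ℝ) := by positivity
  have h1 : |x| ^ k ≤ (Nat.factorial k : ℝ) * Real.exp |x| := by
    have h2 := Real.sum_le_exp_of_nonneg (abs_nonneg x) (k + 1)
    have h3 : |x| ^ k / (Nat.factorial k : ℝ) ≤
        ∑ i ∈ Finset.range (k + 1), |x| ^ i / (Nat.factorial i : ℝ) :=
      Finset.single_le_sum (f := fun i => |x| ^ i / (Nat.factorial i : ℝ))
        (fun i _ => by positivity) (Finset.self_mem_range_succ k)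
    calc |x| ^ k = (|x| ^ k / (Nat.factorial k : ℝ)) * (Nat.factorial k : ℝ) := by field_simp
    _ ≤ Real.exp |x| * (Nat.factorial k : ℝ) :=
        mul_le_mul_of_nonneg_right (le_trans h3 h2) hk.le
    _ = (Nat.factorial k : ℝ) * Real.exp |x| := by ring
  have h4 : |x| ≤ (4 * σ ^ 2)⁻¹ * x ^ 2 + σ ^ 2 := by
    have hs : (0:ℝ) < 4 * σ ^ 2 := by positivity
    rw [inv_mul_eq_div, div_add' _ _ _ hs.ne', le_div_iff₀ hs]
    nlinarith [sq_nonneg (|x| - 2 * σ ^ 2), sq_abs x]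
  have h5 : Real.exp |x| ≤ Real.exp (σ ^ 2) * Real.exp ((4 * σ ^ 2)⁻¹ * x ^ 2) := by
    rw [← Real.exp_add]
    exact Real.exp_le_exp.mpr (by linarith)
  have h6 : gp σ x = c * Real.exp (-x ^ 2 / (2 * σ ^ 2)) := by rw [gp_eq]
  rw [Real.norm_eq_abs, abs_of_nonneg (mul_nonneg (pow_nonneg (abs_nonneg x) k) (gp_nonneg σ x))]
  have h7 : Real.exp ((4 * σ ^ 2)⁻¹ * x ^ 2) * Real.exp (-x ^ 2 / (2 * σ ^ 2)) ≤
      Real.exp (-(4 * σ ^ 2)⁻¹ * x ^ 2) := by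
    rw [← Real.exp_add]
    apply Real.exp_le_exp.mpr
    have h8 : (4 * σ ^ 2)⁻¹ * x ^ 2 + -x ^ 2 / (2 * σ ^ 2) = -((4 * σ ^ 2)⁻¹) * x ^ 2 := by
      have hσ2 : (σ:ℝ) ^ 2 ≠ 0 := by positivity
      field_simp
      ring
    rw [h8]
  calc |x| ^ k * gp σ x
      ≤ ((Nat.factorial k : ℝ) * Real.exp |x|) * (c * Real.exp (-x ^ 2 / (2 * σ ^ 2))) := by
        rw [h6]
        apply mul_le_mul_of_nonneg_right h1 (by positivity)
  _ ≤ ((Nat.factorial k : ℝ) * (Real.exp (σ ^ 2) * Real.exp ((4 * σ ^ 2)⁻¹ * x ^ 2))) *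
        (c * Real.exp (-x ^ 2 / (2 * σ ^ 2))) := by
        apply mul_le_mul_of_nonneg_right _ (by positivity)
        apply mul_le_mul_of_nonneg_left h5 hk.le
  _ = ((Nat.factorial k : ℝ) * c * Real.exp (σ ^ 2)) *
        (Real.exp ((4 * σ ^ 2)⁻¹ * x ^ 2) * Real.exp (-x ^ 2 / (2 * σ ^ 2))) := by ring
  _ ≤ ((Nat.factorial k : ℝ) * c * Real.exp (σ ^ 2)) * Real.exp (-(4 * σ ^ 2)⁻¹ * x ^ 2) :=
        mul_le_mul_of_nonneg_left h7 (by positivity)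

lemma integrable_xpow_gp {σ : ℝ} (hσ : 0 < σ) (k : ℕ) :
    Integrable (fun x => x ^ k * gp σ x) := by
  refine (integrable_abs_pow_gp hσ k).mono'
    (((measurable_id.pow_const k).mul (gp_meas σ)).aestronglyMeasurable)
    (ae_of_all _ fun x => ?_)
  rw [Real.norm_eq_abs, abs_mul, abs_of_nonneg (gp_nonneg σ x), abs_pow]

section FTC
variable {σ : ℝ} (hσ : 0 < σ)

lemma gp_one {σ : ℝ} (hσ : 0 < σ) : ∫ x, gp σ x = 1 :=
  integral_gaussianPDFReal_eq_one 0 (gv_ne hσ)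

lemma integrable_gp : Integrable (gp σ) := integrable_gaussianPDFReal 0 (gv σ)

lemma ig1 (hσ : 0 < σ) : Integrable (fun x => x * gp σ x) := by
  have := integrable_xpow_gp hσ 1
  simpa using this

lemma K1 (hσ : 0 < σ) (a : ℝ) : ∫ x in Ioi a, x * gp σ x = σ ^ 2 * gp σ a := by
  have hderiv : ∀ x ∈ Ici a, HasDerivAt (fun y => -σ ^ 2 * gp σ y) (x * gp σ x) x := by
    intro x _
    have h := (hasDerivAt_gp hσ x).const_mul (-σ ^ 2)
    refine h.congr_deriv ?_
    have hσ2 : (σ:ℝ) ^ 2 ≠ 0 := by positivity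
    field_simp
  have htend : Tendsto (fun y => -σ ^ 2 * gp σ y) atTop (𝓝 0) := by
    have h := (tendsto_pow_gp_atTop hσ 0).const_mul (-σ ^ 2)
    rw [mul_zero] at h
    refine h.congr fun x => by ring
  have := integral_Ioi_of_hasDerivAt_of_tendsto' hderiv ((ig1 hσ).integrableOn) htend
  rw [this]; ring

lemma K1' (hσ : 0 < σ) (a : ℝ) : ∫ x in Iic a, x * gp σ x = -σ ^ 2 * gp σ a := by
  have hderiv : ∀ x ∈ Iio a, HasDerivAt (fun y => -σ ^ 2 * gp σ y) (x * gp σ x) x := by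
    intro x _
    have h := (hasDerivAt_gp hσ x).const_mul (-σ ^ 2)
    refine h.congr_deriv ?_
    have hσ2 : (σ:ℝ) ^ 2 ≠ 0 := by positivity
    field_simp
  have htend : Tendsto (fun y => -σ ^ 2 * gp σ y) atBot (𝓝 0) := by
    have h := (tendsto_pow_gp_atBot hσ 0).const_mul (-σ ^ 2)
    rw [mul_zero] at h
    refine h.congr fun x => by ring
  have hcont : ContinuousWithinAt (fun y => -σ ^ 2 * gp σ y) (Iic a) a :=
    (((hasDerivAt_gp hσ a).const_mul (-σ ^ 2)).continuousAt).continuousWithinAt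
  have := integral_Iic_of_hasDerivAt_of_tendsto hcont hderiv ((ig1 hσ).integrableOn) htend
  rw [this]; ring

lemma gp_mean (hσ : 0 < σ) : ∫ x, x * gp σ x = 0 := by
  have h := intervalIntegral.integral_Iic_add_Ioi (b := (0:ℝ)) ((ig1 hσ).integrableOn) ((ig1 hσ).integrableOn)
  rw [K1 hσ 0, K1' hσ 0] at h
  rw [← h]; ring

lemma K2 (hσ : 0 < σ) (a : ℝ) :
    ∫ x in Ioi a, x * (x - a) * gp σ x = σ ^ 2 * ∫ x in Ioi a, gp σ x := by
  have hσ2 : (σ:ℝ) ^ 2 ≠ 0 := by positivity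
  have hderiv : ∀ x ∈ Ici a, HasDerivAt (fun y => -σ ^ 2 * ((y - a) * gp σ y))
      (-σ ^ 2 * gp σ x + x * (x - a) * gp σ x) x := by
    intro x _
    have h := (((hasDerivAt_id x).sub_const a).mul (hasDerivAt_gp hσ x)).const_mul (-σ ^ 2)
    refine h.congr_deriv ?_
    field_simp
    simp only [id_eq]
    ring
  have hint : Integrable (fun x => -σ ^ 2 * gp σ x + x * (x - a) * gp σ x) := by
    have heq : (fun x => -σ ^ 2 * gp σ x + x * (x - a) * gp σ x)
        = fun x => (-σ ^ 2) * gp σ x + (x ^ 2 * gp σ x - a * (x * gp σ x)) := by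
      funext x; ring
    rw [heq]
    exact (integrable_gp.const_mul _).add ((integrable_xpow_gp hσ 2).sub ((ig1 hσ).const_mul a))
  have htend : Tendsto (fun y => -σ ^ 2 * ((y - a) * gp σ y)) atTop (𝓝 0) := by
    have h1 := (tendsto_pow_gp_atTop hσ 1).const_mul (-σ ^ 2)
    have h0 := (tendsto_pow_gp_atTop hσ 0).const_mul (σ ^ 2 * a)
    rw [mul_zero] at h1 h0
    have h := h1.add h0
    rw [add_zero] at h
    refine h.congr fun x => by ring
  have hres := integral_Ioi_of_hasDerivAt_of_tendsto' hderiv hint.integrableOn htend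
  simp only [sub_self, mul_zero, zero_mul, sub_zero, zero_sub, neg_neg] at hres
  have hsplit : ∫ x in Ioi a, (-σ ^ 2 * gp σ x + x * (x - a) * gp σ x)
      = (∫ x in Ioi a, -σ ^ 2 * gp σ x) + ∫ x in Ioi a, x * (x - a) * gp σ x := by
    apply integral_add
    · exact (integrable_gp.const_mul _).integrableOn
    · have heq : (fun x => x * (x - a) * gp σ x)
          = fun x => x ^ 2 * gp σ x - a * (x * gp σ x) := by funext x; ring
      rw [heq]
      exact ((integrable_xpow_gp hσ 2).sub ((ig1 hσ).const_mul a)).integrableOn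
  rw [hsplit, integral_const_mul] at hres
  linarith [hres]

lemma K3 (hσ : 0 < σ) (a : ℝ) :
    ∫ x in Ioi a, x * (x - a) ^ 2 * gp σ x
      = 2 * σ ^ 2 * ∫ x in Ioi a, (x - a) * gp σ x := by
  have hσ2 : (σ:ℝ) ^ 2 ≠ 0 := by positivity
  have hderiv : ∀ x ∈ Ici a, HasDerivAt (fun y => -σ ^ 2 * ((y - a) ^ 2 * gp σ y))
      (-σ ^ 2 * (2 * ((x - a) * gp σ x)) + x * (x - a) ^ 2 * gp σ x) x := by
    intro x _
    have hp : HasDerivAt (fun y : ℝ => (y - a) ^ 2) (2 * (x - a) ^ 1) x := by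
      simpa using (HasDerivAt.fun_pow ((hasDerivAt_id x).sub_const a) 2)
    have h := (hp.mul (hasDerivAt_gp hσ x)).const_mul (-σ ^ 2)
    refine h.congr_deriv ?_
    field_simp
    ring
  have heqsum : (fun x => -σ ^ 2 * (2 * ((x - a) * gp σ x)) + x * (x - a) ^ 2 * gp σ x)
      = fun x => ((-2 * σ ^ 2) * (x * gp σ x) + (2 * σ ^ 2 * a) * gp σ x)
        + (x ^ 3 * gp σ x - (2 * a) * (x ^ 2 * gp σ x) + a ^ 2 * (x * gp σ x)) := by
    funext x; ring
  have hint : Integrable (fun x => -σ ^ 2 * (2 * ((x - a) * gp σ x)) + x * (x - a) ^ 2 * gp σ x) := by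
    rw [heqsum]
    exact (((ig1 hσ).const_mul _).add (integrable_gp.const_mul _)).add
      (((integrable_xpow_gp hσ 3).sub ((integrable_xpow_gp hσ 2).const_mul _)).add
        ((ig1 hσ).const_mul _))
  have htend : Tendsto (fun y => -σ ^ 2 * ((y - a) ^ 2 * gp σ y)) atTop (𝓝 0) := by
    have h2 := (tendsto_pow_gp_atTop hσ 2).const_mul (-σ ^ 2)
    have h1 := (tendsto_pow_gp_atTop hσ 1).const_mul (2 * σ ^ 2 * a)
    have h0 := (tendsto_pow_gp_atTop hσ 0).const_mul (-σ ^ 2 * a ^ 2)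
    rw [mul_zero] at h2 h1 h0
    have h := (h2.add h1).add h0
    rw [add_zero, add_zero] at h
    refine h.congr fun x => by ring
  have hres := integral_Ioi_of_hasDerivAt_of_tendsto' hderiv hint.integrableOn htend
  have hzero : -σ ^ 2 * ((a - a) ^ 2 * gp σ a) = 0 := by
    rw [sub_self]
    ring
  rw [hzero, zero_sub] at hres
  have hintm : Integrable (fun x => (x - a) * gp σ x) := by
    have heq : (fun x => (x - a) * gp σ x) = fun x => x * gp σ x - a * gp σ x := by
      funext x; ring
    rw [heq]
    exact (ig1 hσ).sub (integrable_gp.const_mul _)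
  have hint2 : Integrable (fun x => x * (x - a) ^ 2 * gp σ x) := by
    have heq : (fun x => x * (x - a) ^ 2 * gp σ x)
        = fun x => x ^ 3 * gp σ x - (2 * a) * (x ^ 2 * gp σ x) + a ^ 2 * (x * gp σ x) := by
      funext x; ring
    rw [heq]
    exact ((integrable_xpow_gp hσ 3).sub ((integrable_xpow_gp hσ 2).const_mul _)).add
      ((ig1 hσ).const_mul _)
  have hsplit : ∫ x in Ioi a, (-σ ^ 2 * (2 * ((x - a) * gp σ x)) + x * (x - a) ^ 2 * gp σ x)
      = (∫ x in Ioi a, (-2 * σ ^ 2) * ((x - a) * gp σ x)) + ∫ x in Ioi a, x * (x - a) ^ 2 * gp σ x := by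
    rw [← integral_add ((hintm.const_mul _).integrableOn) hint2.integrableOn]
    congr 1
    funext x
    ring
  rw [hsplit, integral_const_mul] at hres
  linarith [hres]

lemma gp_var (hσ : 0 < σ) : ∫ x, x ^ 2 * gp σ x = σ ^ 2 := by
  have hσ2 : (σ:ℝ) ^ 2 ≠ 0 := by positivity
  have hderiv : ∀ x : ℝ, HasDerivAt (fun y => -σ ^ 2 * (y * gp σ y))
      (-σ ^ 2 * gp σ x + x ^ 2 * gp σ x) x := by
    intro x
    have h := ((hasDerivAt_id x).mul (hasDerivAt_gp hσ x)).const_mul (-σ ^ 2)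
    refine h.congr_deriv ?_
    field_simp
    simp only [id_eq]
    ring
  have hint : Integrable (fun x => -σ ^ 2 * gp σ x + x ^ 2 * gp σ x) :=
    (integrable_gp.const_mul _).add (integrable_xpow_gp hσ 2)
  have htendT : Tendsto (fun y => -σ ^ 2 * (y * gp σ y)) atTop (𝓝 0) := by
    have h := (tendsto_pow_gp_atTop hσ 1).const_mul (-σ ^ 2)
    rw [mul_zero] at h
    refine h.congr fun x => by ring
  have htendB : Tendsto (fun y => -σ ^ 2 * (y * gp σ y)) atBot (𝓝 0) := by
    have h := (tendsto_pow_gp_atBot hσ 1).const_mul (-σ ^ 2)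
    rw [mul_zero] at h
    refine h.congr fun x => by ring
  have hIoi := integral_Ioi_of_hasDerivAt_of_tendsto' (a := (0:ℝ)) (fun x _ => hderiv x)
    hint.integrableOn htendT
  have hIic := integral_Iic_of_hasDerivAt_of_tendsto (a := (0:ℝ))
    ((hderiv 0).continuousAt.continuousWithinAt) (fun x _ => hderiv x)
    hint.integrableOn htendB
  have hsum := intervalIntegral.integral_Iic_add_Ioi (b := (0:ℝ)) hint.integrableOn hint.integrableOn
  rw [hIoi, hIic] at hsum
  have htot : ∫ x, (-σ ^ 2 * gp σ x + x ^ 2 * gp σ x) = 0 := by rw [← hsum]; ring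
  have hsplit : ∫ x, (-σ ^ 2 * gp σ x + x ^ 2 * gp σ x)
      = (-σ ^ 2) * (∫ x, gp σ x) + ∫ x, x ^ 2 * gp σ x := by
    rw [← integral_const_mul]
    exact integral_add (integrable_gp.const_mul _) (integrable_xpow_gp hσ 2)
  have hone : ∫ x, gp σ x = 1 := integral_gaussianPDFReal_eq_one 0 (gv_ne hσ)
  rw [hsplit, hone] at htot
  linarith

end FTC

section GMeasure
variable {σ : ℝ}

lemma gmap_neg (hσ : 0 < σ) :
    (gaussianReal 0 (gv σ)).map (fun x => -x) = gaussianReal 0 (gv σ) := by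
  have h := gaussianReal_map_const_mul (μ := 0) (v := gv σ) (-1)
  have h1 : (fun x : ℝ => -1 * x) = fun x : ℝ => -x := by funext x; ring
  have h2 : (NNReal.mk ((-1:ℝ)^2) (sq_nonneg _) : ℝ≥0) = 1 := by
    ext; norm_num
  rw [h2, one_mul, mul_zero] at h
  rw [← h1]
  exact h

lemma integral_G (hσ : 0 < σ) {g : ℝ → ℝ} (hg : Measurable g) :
    ∫ x, g x ∂(gaussianReal 0 (gv σ)) = ∫ x, gp σ x * g x := by
  rw [gaussianReal_of_var_ne_zero 0 (gv_ne hσ)]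
  have hd : (gaussianPDF 0 (gv σ)) = fun x => ((gp σ x).toNNReal : ℝ≥0∞) := rfl
  rw [hd, integral_withDensity_eq_integral_smul (gp_meas σ).real_toNNReal g]
  congr 1
  funext x
  rw [NNReal.smul_def, smul_eq_mul, Real.coe_toNNReal _ (gp_nonneg σ x)]

lemma G_apply_toReal (hσ : 0 < σ) {s : Set ℝ} (hs : MeasurableSet s) :
    ((gaussianReal 0 (gv σ)) s).toReal = ∫ x in s, gp σ x := by
  rw [gaussianReal_apply_eq_integral 0 (gv_ne hσ) s]
  exact ENNReal.toReal_ofReal (setIntegral_nonneg hs fun x _ => gp_nonneg σ x)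

lemma integrable_G_of_bound (hσ : 0 < σ) {g : ℝ → ℝ} (hg : Measurable g) (a b : ℝ)
    (hb : ∀ x, |g x| ≤ a + b * x ^ 2) : Integrable g (gaussianReal 0 (gv σ)) := by
  rw [gaussianReal_of_var_ne_zero 0 (gv_ne hσ),
    integrable_withDensity_iff (measurable_gaussianPDF _ _)
      (ae_of_all _ fun x => ENNReal.ofReal_lt_top)]
  have hmaj : Integrable (fun x => a * gp σ x + b * (x ^ 2 * gp σ x)) :=
    (integrable_gp.const_mul a).add ((integrable_xpow_gp hσ 2).const_mul b)
  refine hmaj.mono' (hg.mul ((gp_meas σ).ennreal_ofReal.ennreal_toReal)).aestronglyMeasurable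
    (ae_of_all _ fun x => ?_)
  have htr : ((gaussianPDF 0 (gv σ) x).toReal) = gp σ x :=
    ENNReal.toReal_ofReal (gp_nonneg σ x)
  rw [Real.norm_eq_abs, htr, abs_mul, abs_of_nonneg (gp_nonneg σ x)]
  have := hb x
  nlinarith [gp_nonneg σ x, abs_nonneg (g x)]

lemma R1 {t : ℝ} (hσ : 0 < σ) (ht : 0 < t) :
    ∫ x in Ioi t, gp σ x ≤ σ ^ 2 * gp σ t / t := by
  have h1 : ∫ x in Ioi t, gp σ x ≤ ∫ x in Ioi t, (1 / t) * (x * gp σ x) := by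
    refine setIntegral_mono_on integrable_gp.integrableOn
      (((ig1 hσ).const_mul (1 / t)).integrableOn) measurableSet_Ioi fun x hx => ?_
    have hx' : t < x := hx
    have h := gp_nonneg σ x
    rw [one_div, inv_mul_eq_div, le_div_iff₀ ht]
    nlinarith
  rw [integral_const_mul, K1 hσ t] at h1
  rw [div_eq_inv_mul, ← one_div]
  linarith

lemma intsub (hσ : 0 < σ) (a : ℝ) : Integrable (fun x => (x - a) * gp σ x) := by
  have heq : (fun x => (x - a) * gp σ x) = fun x => x * gp σ x - a * gp σ x := by
    funext x; ring
  rw [heq]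
  exact (ig1 hσ).sub (integrable_gp.const_mul _)

lemma intsub2 (hσ : 0 < σ) (a : ℝ) : Integrable (fun x => (x - a) ^ 2 * gp σ x) := by
  have heq : (fun x => (x - a) ^ 2 * gp σ x)
      = fun x => x ^ 2 * gp σ x - (2 * a) * (x * gp σ x) + a ^ 2 * gp σ x := by
    funext x; ring
  rw [heq]
  exact ((integrable_xpow_gp hσ 2).sub ((ig1 hσ).const_mul _)).add (integrable_gp.const_mul _)

lemma intxsub (hσ : 0 < σ) (a : ℝ) : Integrable (fun x => x * (x - a) * gp σ x) := by
  have heq : (fun x => x * (x - a) * gp σ x)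
      = fun x => x ^ 2 * gp σ x - a * (x * gp σ x) := by funext x; ring
  rw [heq]
  exact (integrable_xpow_gp hσ 2).sub ((ig1 hσ).const_mul _)

lemma intxsub2 (hσ : 0 < σ) (a : ℝ) : Integrable (fun x => x * (x - a) ^ 2 * gp σ x) := by
  have heq : (fun x => x * (x - a) ^ 2 * gp σ x)
      = fun x => x ^ 3 * gp σ x - (2 * a) * (x ^ 2 * gp σ x) + a ^ 2 * (x * gp σ x) := by
    funext x; ring
  rw [heq]
  exact ((integrable_xpow_gp hσ 3).sub ((integrable_xpow_gp hσ 2).const_mul _)).add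
    ((ig1 hσ).const_mul _)

lemma R2 {t : ℝ} (hσ : 0 < σ) (ht : 0 < t) :
    ∫ x in Ioi t, (x - t) * gp σ x ≤ (σ ^ 2 / t) * ∫ x in Ioi t, gp σ x := by
  have h1 : ∫ x in Ioi t, (x - t) * gp σ x ≤ ∫ x in Ioi t, (1 / t) * (x * (x - t) * gp σ x) := by
    refine setIntegral_mono_on (intsub hσ t).integrableOn
      (((intxsub hσ t).const_mul (1 / t)).integrableOn) measurableSet_Ioi fun x hx => ?_
    have hx' : t < x := hx
    have h := gp_nonneg σ x
    rw [one_div, inv_mul_eq_div, le_div_iff₀ ht]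
    nlinarith [mul_nonneg (mul_nonneg (sub_nonneg.mpr hx'.le) (sub_nonneg.mpr hx'.le)) h]
  rw [integral_const_mul, K2 hσ t] at h1
  rw [div_eq_inv_mul, ← one_div]
  linarith

lemma R3 {t : ℝ} (hσ : 0 < σ) (ht : 0 < t) :
    ∫ x in Ioi t, (x - t) ^ 2 * gp σ x ≤ (2 * σ ^ 2 / t) * ∫ x in Ioi t, (x - t) * gp σ x := by
  have h1 : ∫ x in Ioi t, (x - t) ^ 2 * gp σ x
      ≤ ∫ x in Ioi t, (1 / t) * (x * (x - t) ^ 2 * gp σ x) := by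
    refine setIntegral_mono_on (intsub2 hσ t).integrableOn
      (((intxsub2 hσ t).const_mul (1 / t)).integrableOn) measurableSet_Ioi fun x hx => ?_
    have hx' : t < x := hx
    have h := gp_nonneg σ x
    rw [one_div, inv_mul_eq_div, le_div_iff₀ ht]
    nlinarith [mul_nonneg (mul_nonneg (mul_nonneg (sub_nonneg.mpr hx'.le)
      (sub_nonneg.mpr hx'.le)) (sub_nonneg.mpr hx'.le)) h]
  rw [integral_const_mul, K3 hσ t] at h1
  rw [div_eq_inv_mul, ← one_div]
  linarith

lemma sigma_phi {t : ℝ} (hσ : 0 < σ) :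
    σ ^ 2 * gp σ t = σ * (Real.exp (-(t / σ) ^ 2 / 2) / Real.sqrt (2 * π)) := by
  have h1 : Real.sqrt (2 * π * σ ^ 2) = Real.sqrt (2 * π) * σ := by
    rw [Real.sqrt_mul (by positivity), Real.sqrt_sq hσ.le]
  have h0 : gp σ t = (Real.sqrt (2 * π) * σ)⁻¹ * Real.exp (-(t / σ) ^ 2 / 2) := by
    rw [gp_eq]
    show (Real.sqrt (2 * π * σ ^ 2))⁻¹ * Real.exp (-t ^ 2 / (2 * σ ^ 2)) = _
    rw [h1]
    congr 2
    rw [div_pow]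
    ring
  rw [h0]
  have h3 : Real.sqrt (2 * π) ≠ 0 := by positivity
  field_simp

lemma Gsq (hσ : 0 < σ) (c : ℝ) :
    ∫ x, (x - c) ^ 2 ∂(gaussianReal 0 (gv σ)) = σ ^ 2 + c ^ 2 := by
  rw [integral_G hσ ((measurable_id'.sub_const c).pow_const 2)]
  have heq : (fun x => gp σ x * (x - c) ^ 2)
      = fun x => (x ^ 2 * gp σ x - 2 * c * (x * gp σ x)) + c ^ 2 * gp σ x := by
    funext x; ring
  have hA : Integrable (fun x => x ^ 2 * gp σ x - 2 * c * (x * gp σ x)) :=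
    (integrable_xpow_gp hσ 2).sub ((ig1 hσ).const_mul (2 * c))
  have hB : Integrable (fun x => c ^ 2 * gp σ x) := integrable_gp.const_mul _
  rw [heq, integral_add hA hB,
    integral_sub (integrable_xpow_gp hσ 2) ((ig1 hσ).const_mul (2 * c)), integral_const_mul,
    integral_const_mul, gp_var hσ, gp_mean hσ, gp_one hσ]
  ring

end GMeasure

/-- The soft-threshold map `s_u(x) = sgn(x)(|x| - u)₊`. -/
noncomputable def softThreshold (u x : ℝ) : ℝ := Real.sign x * max (|x| - u) 0

lemma softThreshold_zero {u x : ℝ} (h : |x| ≤ u) : softThreshold u x = 0 := by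
  simp [softThreshold, max_eq_right (sub_nonpos.mpr h)]

lemma softThreshold_of_gt {u x : ℝ} (hu : 0 ≤ u) (h : u < x) : softThreshold u x = x - u := by
  have hx : 0 < x := lt_of_le_of_lt hu h
  rw [softThreshold, Real.sign_of_pos hx, abs_of_pos hx, max_eq_left (by linarith), one_mul]

lemma softThreshold_neg (u x : ℝ) : softThreshold u (-x) = - softThreshold u x := by
  rcases lt_trichotomy x 0 with h|h|h
  · rw [softThreshold, softThreshold, Real.sign_of_neg h, Real.sign_of_pos (by linarith : 0 < -x),
      abs_neg]; ring
  · simp [h, softThreshold]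
  · rw [softThreshold, softThreshold, Real.sign_of_pos h, Real.sign_of_neg (by linarith : -x < 0),
      abs_neg]; ring

lemma softThreshold_of_lt {u x : ℝ} (hu : 0 ≤ u) (h : x < -u) : softThreshold u x = x + u := by
  have := softThreshold_of_gt hu (by linarith : u < -x)
  rw [softThreshold_neg] at this; linarith

lemma ptwise2 (μ ε e d t Δ : ℝ) (ht : 0 < t) (hμ : 0 ≤ μ)
    (hed : |e| + |d| ≤ Δ) (hd : |e| < d) :
    (softThreshold (t + d) (μ + ε + e) - μ) ^ 2 ≤ (ε - (t + Δ)) ^ 2 + 2 * Δ * max (ε - t) 0 := by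
  have he1 : -|e| ≤ e := neg_abs_le e
  have he2 : e ≤ |e| := le_abs_self e
  have he0 : 0 ≤ |e| := abs_nonneg e
  have hd0 : 0 < d := lt_of_le_of_lt he0 hd
  have hdd : |d| = d := abs_of_pos hd0
  have hΔ0 : 0 ≤ Δ := le_trans (by linarith) hed
  have hm0 : 0 ≤ max (ε - t) 0 := le_max_right _ _
  have hm1 : ε - t ≤ max (ε - t) 0 := le_max_left _ _
  by_cases h1 : |μ + ε + e| ≤ t + d
  · rw [softThreshold_zero h1]
    rcases abs_le.mp h1 with ⟨hl, hr⟩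
    nlinarith [sq_nonneg (ε - (t + Δ) + μ)]
  · push_neg at h1
    rcases lt_abs.mp h1 with h2 | h2
    · rw [softThreshold_of_gt (by linarith) h2]
      have herr1 : (μ + ε + e) - (t + d) - μ ≤ ε - t := by linarith [hdd ▸ hed]
      have herr2 : ε - t - Δ ≤ (μ + ε + e) - (t + d) - μ := by
        have : e - d ≥ -Δ := by linarith [hdd ▸ hed]
        linarith
      rcases le_or_gt 0 ((ε - t - Δ) + (ε - t)) with hc | hc
      · nlinarith [mul_nonneg (by linarith : (0:ℝ) ≤ (μ + ε + e) - (t + d) - μ - (ε - t - Δ))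
          (by linarith : (0:ℝ) ≤ ε - t - ((μ + ε + e) - (t + d) - μ))]
      · nlinarith [mul_nonneg (by linarith : (0:ℝ) ≤ (μ + ε + e) - (t + d) - μ - (ε - t - Δ))
          (by linarith : (0:ℝ) ≤ ε - t - ((μ + ε + e) - (t + d) - μ))]
    · rw [softThreshold_of_lt (by linarith) (by linarith : μ + ε + e < -(t + d))]
      have hεt : ε + t < -(e + d) := by linarith
      have hed1 : 0 < e + d := by linarith
      have hed2 : e + d ≤ Δ := by linarith [hdd ▸ hed]
      nlinarith [sq_nonneg (ε + t + (e + d))]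

lemma ptwise1 (μ ε e d t Δ : ℝ) (ht : 0 < t)
    (hed : |e| + |d| ≤ Δ) (hd : |e| < d) :
    (softThreshold (t + d) (μ + ε + e) - μ) ^ 2 ≤
      μ ^ 2 + (max (ε - t) 0) ^ 2 + (max (-ε - t) 0) ^ 2
        + Δ ^ 2 * (Set.indicator (Ioi t) 1 ε + Set.indicator (Iio (-t)) 1 ε) := by
  have he1 : -|e| ≤ e := neg_abs_le e
  have he2 : e ≤ |e| := le_abs_self e
  have he0 : 0 ≤ |e| := abs_nonneg e
  have hd0 : 0 < d := lt_of_le_of_lt he0 hd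
  have hdd : |d| = d := abs_of_pos hd0
  have hΔ0 : 0 ≤ Δ := le_trans (by linarith) hed
  have hm0 : 0 ≤ max (ε - t) 0 := le_max_right _ _
  have hm0' : 0 ≤ max (-ε - t) 0 := le_max_right _ _
  have hi0 : (0:ℝ) ≤ Set.indicator (Ioi t) 1 ε := Set.indicator_nonneg (by intro x _; norm_num) _
  have hi0' : (0:ℝ) ≤ Set.indicator (Iio (-t)) 1 ε := Set.indicator_nonneg (by intro x _; norm_num) _
  by_cases h1 : |μ + ε + e| ≤ t + d
  · rw [softThreshold_zero h1]
    nlinarith [sq_nonneg (max (ε - t) 0), sq_nonneg (max (-ε - t) 0)]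
  · push_neg at h1
    rcases lt_abs.mp h1 with h2 | h2
    · rw [softThreshold_of_gt (by linarith) h2]
      have herr1 : (μ + ε + e) - (t + d) - μ ≤ ε - t := by linarith [hdd ▸ hed]
      have herr2 : ε - t - Δ ≤ (μ + ε + e) - (t + d) - μ := by
        have : e - d ≥ -Δ := by linarith [hdd ▸ hed]
        linarith
      by_cases hε : t < ε
      · have hind : Set.indicator (Ioi t) (1 : ℝ → ℝ) ε = 1 := Set.indicator_of_mem (show ε ∈ Ioi t from hε) _
        rw [hind]
        have hmax : max (ε - t) 0 = ε - t := max_eq_left (by linarith)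
        rw [hmax]
        nlinarith [mul_nonneg (by linarith : (0:ℝ) ≤ (μ + ε + e) - (t + d) - μ - (ε - t - Δ))
          (by linarith : (0:ℝ) ≤ ε - t - ((μ + ε + e) - (t + d) - μ))]
      · push_neg at hε
        have herr3 : (μ + ε + e) - (t + d) - μ ≤ 0 := by linarith
        have herr4 : -μ < (μ + ε + e) - (t + d) - μ := by linarith
        nlinarith [sq_nonneg (max (ε - t) 0), sq_nonneg (max (-ε - t) 0)]
    · rw [softThreshold_of_lt (by linarith) (by linarith : μ + ε + e < -(t + d))]
      have hed1 : 0 < e + d := by linarith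
      have hed2 : e + d ≤ Δ := by linarith [hdd ▸ hed]
      by_cases hε : ε < -t
      · have hind : Set.indicator (Iio (-t)) (1 : ℝ → ℝ) ε = 1 := Set.indicator_of_mem (show ε ∈ Iio (-t) from hε) _
        rw [hind]
        have hmax : max (-ε - t) 0 = -ε - t := max_eq_left (by linarith)
        rw [hmax]
        nlinarith [mul_nonneg (by linarith : (0:ℝ) ≤ (μ + ε + e) + (t + d) - μ - (ε + t))
          (by linarith : (0:ℝ) ≤ (ε + t + Δ) - ((μ + ε + e) + (t + d) - μ))]
      · push_neg at hε
        have herr3 : 0 < (μ + ε + e) + (t + d) - μ := by linarith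
        have herr4 : (μ + ε + e) + (t + d) - μ < -μ := by linarith
        nlinarith [sq_nonneg (max (ε - t) 0), sq_nonneg (max (-ε - t) 0)]

/-- The standard normal density `φ(x) = e^{-x²/2}/√(2π)`. -/
noncomputable def stdNormalPdf (x : ℝ) : ℝ := Real.exp (-x ^ 2 / 2) / Real.sqrt (2 * Real.pi)

lemma measurable_realSign : Measurable Real.sign := by
  have h : Real.sign = fun r : ℝ => if r < 0 then (-1:ℝ) else if 0 < r then 1 else 0 :=
    funext fun r => rfl
  rw [h]
  exact Measurable.ite measurableSet_Iio measurable_const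
    (Measurable.ite measurableSet_Ioi measurable_const measurable_const)

lemma ind01 (s : Set ℝ) (x : ℝ) :
    0 ≤ s.indicator (1 : ℝ → ℝ) x ∧ s.indicator (1 : ℝ → ℝ) x ≤ 1 := by
  classical
  rw [Set.indicator_apply]
  split_ifs <;> norm_num

lemma arith1 (E1 E2 Q Δ μ : ℝ) (hΔ0 : 0 ≤ Δ) (hE1 : 0 ≤ E1) (hQ : 0 ≤ Q) :
    μ ^ 2 + 2 * E2 + 2 * Δ ^ 2 * Q ≤ (2 * E2 + μ ^ 2) + Δ * (2 * E1 + 3 * Δ * Q) := by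
  nlinarith [mul_nonneg hΔ0 hE1, mul_nonneg (mul_nonneg hΔ0 hΔ0) hQ]

lemma arith2 (E1 Q Δ B : ℝ) (hΔ0 : 0 ≤ Δ) (hQ : 0 ≤ Q) :
    B + 2 * Δ * E1 ≤ B + Δ * (2 * E1 + 3 * Δ * Q) := by
  nlinarith [mul_nonneg (mul_nonneg hΔ0 hΔ0) hQ]

lemma arith3 (E1 E2 Q Δ μ B φv σ t : ℝ) (hΔ0 : 0 ≤ Δ) (hE2nn : 0 ≤ E2)
    (hQb : Q ≤ σ * φv / t) (hE1b : E1 ≤ σ ^ 3 * φv / t ^ 2) (hE2b : E2 ≤ 2 * σ ^ 5 * φv / t ^ 3) :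
    min (2 * E2 + μ ^ 2) B + Δ * (2 * E1 + 3 * Δ * Q)
      ≤ min (μ ^ 2) B
        + φv * (4 * σ ^ 5 / t ^ 3 + 2 * Δ * σ ^ 3 / t ^ 2 + 3 * Δ ^ 2 * σ / t) := by
  have hminle : min (2 * E2 + μ ^ 2) B ≤ min (μ ^ 2) B + 2 * E2 := by
    rcases le_total (μ ^ 2) B with h | h
    · rw [min_eq_left h]
      exact (min_le_left _ _).trans (by linarith)
    · rw [min_eq_right h]
      exact (min_le_right _ _).trans (by linarith)
  have hterm1 : 2 * E2 ≤ φv * (4 * σ ^ 5 / t ^ 3) := by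
    have h : φv * (4 * σ ^ 5 / t ^ 3) = 2 * (2 * σ ^ 5 * φv / t ^ 3) := by ring
    rw [h]; linarith
  have hterm2 : Δ * (2 * E1) ≤ φv * (2 * Δ * σ ^ 3 / t ^ 2) := by
    have h := mul_le_mul_of_nonneg_left hE1b hΔ0
    have h2 : φv * (2 * Δ * σ ^ 3 / t ^ 2) = 2 * (Δ * (σ ^ 3 * φv / t ^ 2)) := by ring
    have h3 : Δ * (2 * E1) = 2 * (Δ * E1) := by ring
    rw [h2, h3]; linarith
  have hterm3 : Δ * (3 * Δ * Q) ≤ φv * (3 * Δ ^ 2 * σ / t) := by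
    have h := mul_le_mul_of_nonneg_left hQb (mul_nonneg hΔ0 hΔ0)
    have h2 : φv * (3 * Δ ^ 2 * σ / t) = 3 * (Δ * Δ * (σ * φv / t)) := by ring
    have h3 : Δ * (3 * Δ * Q) = 3 * (Δ * Δ * Q) := by ring
    rw [h2, h3]; linarith
  calc min (2 * E2 + μ ^ 2) B + Δ * (2 * E1 + 3 * Δ * Q)
      = min (2 * E2 + μ ^ 2) B + (Δ * (2 * E1) + Δ * (3 * Δ * Q)) := by ring
  _ ≤ (min (μ ^ 2) B + 2 * E2) + (Δ * (2 * E1) + Δ * (3 * Δ * Q)) := by linarith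
  _ ≤ min (μ ^ 2) B + (φv * (4 * σ ^ 5 / t ^ 3) + φv * (2 * Δ * σ ^ 3 / t ^ 2)
        + φv * (3 * Δ ^ 2 * σ / t)) := by linarith
  _ = min (μ ^ 2) B + φv * (4 * σ ^ 5 / t ^ 3 + 2 * Δ * σ ^ 3 / t ^ 2
        + 3 * Δ ^ 2 * σ / t) := by ring

/-- risk bound for a perturbed soft-threshold estimator (Lemma 1). -/
theorem perturbed_soft_threshold_risk
    {Ω : Type*} [MeasurableSpace Ω] (P : Measure Ω) [IsProbabilityMeasure P]
    (σ : ℝ) (hσ : 0 < σ) (ε : Ω → ℝ) (hε : Measurable ε)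
    (hlaw : P.map ε = gaussianReal 0 ⟨σ ^ 2, sq_nonneg σ⟩)
    (μ : ℝ) (z : Ω → ℝ) (hz : z = fun ω => μ + ε ω)
    (zhat that : Ω → ℝ) (hzhat : Measurable zhat) (hthat : Measurable that)
    (Ω₀ : Set Ω) (hΩ₀ : MeasurableSet Ω₀)
    (t Δ : ℝ) (ht : 0 < t) (hΔ0 : 0 ≤ Δ) (hΔt : Δ ≤ t)
    (hbound : ∀ ω ∈ Ω₀, |zhat ω - z ω| + |that ω - t| ≤ Δ)
    (hthr : ∀ ω ∈ Ω₀, that ω > t + |zhat ω - z ω|) :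
    (∫ ω in Ω₀, (softThreshold (that ω) (zhat ω) - μ) ^ 2 ∂P) ≤
      min (2 * (∫ ω, (max (ε ω - t) 0) ^ 2 ∂P) + μ ^ 2) (σ ^ 2 + (t + Δ) ^ 2)
        + Δ * (2 * (∫ ω, max (ε ω - t) 0 ∂P) + 3 * Δ * (P {ω | t < ε ω}).toReal) ∧
    min (2 * (∫ ω, (max (ε ω - t) 0) ^ 2 ∂P) + μ ^ 2) (σ ^ 2 + (t + Δ) ^ 2)
        + Δ * (2 * (∫ ω, max (ε ω - t) 0 ∂P) + 3 * Δ * (P {ω | t < ε ω}).toReal) ≤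
      min (μ ^ 2) (σ ^ 2 + (t + Δ) ^ 2)
        + stdNormalPdf (t / σ) *
          (4 * σ ^ 5 / t ^ 3 + 2 * Δ * σ ^ 3 / t ^ 2 + 3 * Δ ^ 2 * σ / t) := by
  have hlaw' : P.map ε = gaussianReal 0 (gv σ) := hlaw
  set G := gaussianReal 0 (gv σ) with hGdef
  -- conversion helpers
  have hcomp : ∀ {g : ℝ → ℝ}, Measurable g → Integrable g G →
      Integrable (fun ω => g (ε ω)) P := by
    intro g hg hgi
    rw [← hlaw'] at hgi
    exact (integrable_map_measure hg.aestronglyMeasurable hε.aemeasurable).mp hgi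
  have hieq : ∀ {g : ℝ → ℝ}, Measurable g → (∫ ω, g (ε ω) ∂P) = ∫ x, g x ∂G := by
    intro g hg
    have h := integral_map (μ := P) hε.aemeasurable (f := g)
      (by rw [hlaw']; exact hg.aestronglyMeasurable)
    rw [hlaw'] at h
    exact h.symm
  have hsymG : ∀ {g : ℝ → ℝ}, Measurable g → ∫ x, g (-x) ∂G = ∫ x, g x ∂G := by
    intro g hg
    have h := integral_map (μ := G) (φ := fun x : ℝ => -x) measurable_neg.aemeasurable
      (f := g) (by rw [hGdef, gmap_neg hσ]; exact hg.aestronglyMeasurable)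
    rw [hGdef, gmap_neg hσ] at h
    exact h.symm
  -- measurable real-side functions
  have hmp : Measurable (fun x : ℝ => max (x - t) 0) :=
    (measurable_id'.sub_const t).max measurable_const
  have hmn : Measurable (fun x : ℝ => max (-x - t) 0) :=
    (measurable_id'.neg.sub_const t).max measurable_const
  have hmp2 : Measurable (fun x : ℝ => (max (x - t) 0) ^ 2) := hmp.pow_const 2
  have hmn2 : Measurable (fun x : ℝ => (max (-x - t) 0) ^ 2) := hmn.pow_const 2
  have hip : Measurable ((Ioi t).indicator (1 : ℝ → ℝ)) :=
    measurable_one.indicator measurableSet_Ioi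
  have hin : Measurable ((Iio (-t)).indicator (1 : ℝ → ℝ)) :=
    measurable_one.indicator measurableSet_Iio
  -- G-integrability
  have hmpG : Integrable (fun x : ℝ => max (x - t) 0) G := by
    refine integrable_G_of_bound hσ hmp (|t| + 1) 1 fun x => ?_
    have h1 : (0:ℝ) ≤ max (x - t) 0 := le_max_right _ _
    rw [abs_of_nonneg h1]
    have h2 : x - t ≤ |x| + |t| := by
      have := le_abs_self x; have := neg_abs_le t; have := le_abs_self t; linarith
    have h3 : |x| ≤ 1 + x ^ 2 := by nlinarith [sq_nonneg (|x| - 1), sq_abs x, abs_nonneg x]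
    have h4 : (0:ℝ) ≤ |x| + |t| := by positivity
    have := max_le h2 h4
    nlinarith
  have hmp2G : Integrable (fun x : ℝ => (max (x - t) 0) ^ 2) G := by
    refine integrable_G_of_bound hσ hmp2 (2 * t ^ 2) 2 fun x => ?_
    have h1 : (0:ℝ) ≤ max (x - t) 0 := le_max_right _ _
    rw [abs_of_nonneg (show (0:ℝ) ≤ (max (x - t) 0) ^ 2 by positivity)]
    have h2 : (max (x - t) 0) ^ 2 ≤ (x - t) ^ 2 := by
      rcases le_or_gt (x - t) 0 with h | h
      · rw [max_eq_right h]; nlinarith [sq_nonneg (x - t)]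
      · rw [max_eq_left h.le]
    nlinarith [sq_nonneg (x + t)]
  have hmnG : Integrable (fun x : ℝ => max (-x - t) 0) G := by
    refine integrable_G_of_bound hσ hmn (|t| + 1) 1 fun x => ?_
    have h1 : (0:ℝ) ≤ max (-x - t) 0 := le_max_right _ _
    rw [abs_of_nonneg h1]
    have h2 : -x - t ≤ |x| + |t| := by
      have := neg_abs_le x; have := le_abs_self t; have := neg_abs_le t; linarith
    have h3 : |x| ≤ 1 + x ^ 2 := by nlinarith [sq_nonneg (|x| - 1), sq_abs x, abs_nonneg x]
    have h4 : (0:ℝ) ≤ |x| + |t| := by positivity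
    have := max_le h2 h4
    nlinarith
  have hmn2G : Integrable (fun x : ℝ => (max (-x - t) 0) ^ 2) G := by
    refine integrable_G_of_bound hσ hmn2 (2 * t ^ 2) 2 fun x => ?_
    rw [abs_of_nonneg (show (0:ℝ) ≤ (max (-x - t) 0) ^ 2 by positivity)]
    have h2 : (max (-x - t) 0) ^ 2 ≤ (x + t) ^ 2 := by
      rcases le_or_gt (-x - t) 0 with h | h
      · rw [max_eq_right h]; nlinarith [sq_nonneg (x + t)]
      · rw [max_eq_left h.le]; nlinarith
    nlinarith [sq_nonneg (x - t)]
  have hipG : Integrable ((Ioi t).indicator (1 : ℝ → ℝ)) G := by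
    refine integrable_G_of_bound hσ hip 1 0 fun x => ?_
    obtain ⟨h1, h2⟩ := ind01 (Ioi t) x
    rw [abs_of_nonneg h1]; linarith
  have hinG : Integrable ((Iio (-t)).indicator (1 : ℝ → ℝ)) G := by
    refine integrable_G_of_bound hσ hin 1 0 fun x => ?_
    obtain ⟨h1, h2⟩ := ind01 (Iio (-t)) x
    rw [abs_of_nonneg h1]; linarith
  have hsqpG : Integrable (fun x : ℝ => (x - (t + Δ)) ^ 2) G := by
    refine integrable_G_of_bound hσ ((measurable_id'.sub_const _).pow_const 2)
      (2 * (t + Δ) ^ 2) 2 fun x => ?_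
    rw [abs_of_nonneg (show (0:ℝ) ≤ (x - (t + Δ)) ^ 2 by positivity)]
    nlinarith [sq_nonneg (x + (t + Δ))]
  have hsqnG : Integrable (fun x : ℝ => (-x - (t + Δ)) ^ 2) G := by
    refine integrable_G_of_bound hσ ((measurable_id'.neg.sub_const _).pow_const 2)
      (2 * (t + Δ) ^ 2) 2 fun x => ?_
    rw [abs_of_nonneg (show (0:ℝ) ≤ (-x - (t + Δ)) ^ 2 by positivity)]
    nlinarith [sq_nonneg (x - (t + Δ))]
    -- quantities
  set E2 := ∫ ω, (max (ε ω - t) 0) ^ 2 ∂P with hE2def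
  set E1 := ∫ ω, max (ε ω - t) 0 ∂P with hE1def
  set Q := (P {ω | t < ε ω}).toReal with hQdef
  set B := σ ^ 2 + (t + Δ) ^ 2 with hBdef
  have hE2G : E2 = ∫ x, (max (x - t) 0) ^ 2 ∂G := hieq hmp2
  have hE1G : E1 = ∫ x, max (x - t) 0 ∂G := hieq hmp
  have hQG : Q = (G (Ioi t)).toReal := by
    rw [hQdef, show {ω | t < ε ω} = ε ⁻¹' (Ioi t) from rfl,
      ← Measure.map_apply hε measurableSet_Ioi, hlaw']
  have hQI : Q = ∫ x in Ioi t, gp σ x := by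
    rw [hQG]; exact G_apply_toReal hσ measurableSet_Ioi
  have hindp : (fun x => gp σ x * max (x - t) 0)
      = (Ioi t).indicator (fun x => (x - t) * gp σ x) := by
    funext x
    by_cases hx : t < x
    · rw [Set.indicator_of_mem (show x ∈ Ioi t from hx), max_eq_left (by linarith)]; ring
    · rw [Set.indicator_of_notMem (show x ∉ Ioi t from hx),
        max_eq_right (by push_neg at hx; linarith), mul_zero]
  have hE1I : E1 = ∫ x in Ioi t, (x - t) * gp σ x := by
    rw [hE1G, integral_G hσ hmp, hindp, integral_indicator measurableSet_Ioi]
  have hindp2 : (fun x => gp σ x * (max (x - t) 0) ^ 2)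
      = (Ioi t).indicator (fun x => (x - t) ^ 2 * gp σ x) := by
    funext x
    by_cases hx : t < x
    · rw [Set.indicator_of_mem (show x ∈ Ioi t from hx), max_eq_left (by linarith)]; ring
    · rw [Set.indicator_of_notMem (show x ∉ Ioi t from hx),
        max_eq_right (by push_neg at hx; linarith)]
      norm_num
  have hE2I : E2 = ∫ x in Ioi t, (x - t) ^ 2 * gp σ x := by
    rw [hE2G, integral_G hσ hmp2, hindp2, integral_indicator measurableSet_Ioi]
  have hE1nn : 0 ≤ E1 := integral_nonneg fun ω => le_max_right _ _
  have hE2nn : 0 ≤ E2 := integral_nonneg fun ω => sq_nonneg _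
  have hQnn : 0 ≤ Q := ENNReal.toReal_nonneg
  have hmnmp : ∫ x, (max (-x - t) 0) ^ 2 ∂G = E2 := by rw [hE2G]; exact hsymG hmp2
  have hmn1 : ∫ x, max (-x - t) 0 ∂G = E1 := by rw [hE1G]; exact hsymG hmp
  have hQneg : (G (Iio (-t))).toReal = Q := by
    rw [hQG]
    congr 1
    have h1 : G (Iio (-t)) = (G.map (fun x : ℝ => -x)) (Iio (-t)) := by
      rw [hGdef, gmap_neg hσ]
    rw [h1, Measure.map_apply measurable_neg measurableSet_Iio]
    congr 1
    ext x
    simp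
  have harm2p : ∫ x, (x - (t + Δ)) ^ 2 ∂G = σ ^ 2 + (t + Δ) ^ 2 := Gsq hσ _
  have harm2n : ∫ x, (-x - (t + Δ)) ^ 2 ∂G = σ ^ 2 + (t + Δ) ^ 2 := by
    rw [← harm2p]; exact hsymG ((measurable_id'.sub_const _).pow_const 2)
  have hipI : ∫ x, (Ioi t).indicator (1 : ℝ → ℝ) x ∂G = Q := by
    rw [integral_indicator measurableSet_Ioi]
    simp only [Pi.one_apply]
    rw [setIntegral_const, hQG, smul_eq_mul, mul_one, measureReal_def]
  have hinI : ∫ x, (Iio (-t)).indicator (1 : ℝ → ℝ) x ∂G = Q := by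
    rw [integral_indicator measurableSet_Iio]
    simp only [Pi.one_apply]
    rw [setIntegral_const, smul_eq_mul, mul_one, measureReal_def, hQneg]
  -- bound functions
  set g1 : ℝ → ℝ := fun x => μ ^ 2 + (max (x - t) 0) ^ 2 + (max (-x - t) 0) ^ 2
      + Δ ^ 2 * ((Ioi t).indicator 1 x + (Iio (-t)).indicator 1 x) with hg1def
  have hg1m : Measurable g1 :=
    ((measurable_const.add hmp2).add hmn2).add ((hip.add hin).const_mul _)
  have hg1G : Integrable g1 G :=
    (((integrable_const _).add hmp2G).add hmn2G).add ((hipG.add hinG).const_mul _)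
  have hg1P : Integrable (fun ω => g1 (ε ω)) P := hcomp hg1m hg1G
  have hg1nn : ∀ x, 0 ≤ g1 x := by
    intro x
    obtain ⟨hip1, _⟩ := ind01 (Ioi t) x
    obtain ⟨hin1, _⟩ := ind01 (Iio (-t)) x
    have h1 := sq_nonneg (max (x - t) 0)
    have h2 := sq_nonneg (max (-x - t) 0)
    have h3 := sq_nonneg μ
    have h4 := mul_nonneg (sq_nonneg Δ) (add_nonneg hip1 hin1)
    simp only [hg1def]
    linarith
  have hIg1 : ∫ ω, g1 (ε ω) ∂P = μ ^ 2 + 2 * E2 + 2 * Δ ^ 2 * Q := by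
    rw [hieq hg1m]
    simp only [hg1def]
    have hAint : Integrable (fun x : ℝ => μ ^ 2 + (max (x - t) 0) ^ 2 + (max (-x - t) 0) ^ 2) G :=
      ((integrable_const _).add hmp2G).add hmn2G
    have hCint : Integrable
        (fun x : ℝ => Δ ^ 2 * ((Ioi t).indicator 1 x + (Iio (-t)).indicator 1 x)) G :=
      (hipG.add hinG).const_mul _
    have hA1 : Integrable (fun x : ℝ => μ ^ 2 + (max (x - t) 0) ^ 2) G :=
      (integrable_const _).add hmp2G
    have hK : Integrable (fun _ : ℝ => μ ^ 2) G := integrable_const _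
    rw [integral_add hAint hCint, integral_add hA1 hmn2G, integral_add hK hmp2G,
      integral_const, integral_const_mul, integral_add hipG hinG, hipI, hinI, hmnmp, ← hE2G]
    simp only [measure_univ, ENNReal.toReal_one, probReal_univ, smul_eq_mul, one_mul]
    ring
  set g2 : ℝ → ℝ := fun x => (x - (t + Δ)) ^ 2 + 2 * Δ * max (x - t) 0 with hg2def
  have hg2m : Measurable g2 :=
    ((measurable_id'.sub_const _).pow_const 2).add (hmp.const_mul _)
  have hg2G : Integrable g2 G := hsqpG.add (hmpG.const_mul _)
  have hg2P : Integrable (fun ω => g2 (ε ω)) P := hcomp hg2m hg2G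
  have hg2nn : ∀ x, 0 ≤ g2 x := by
    intro x
    have h1 := sq_nonneg (x - (t + Δ))
    have h2 : 0 ≤ 2 * Δ * max (x - t) 0 :=
      mul_nonneg (by linarith) (le_max_right _ _)
    simp only [hg2def]
    linarith
  have hIg2 : ∫ ω, g2 (ε ω) ∂P = (σ ^ 2 + (t + Δ) ^ 2) + 2 * Δ * E1 := by
    rw [hieq hg2m]
    simp only [hg2def]
    have hD : Integrable (fun x : ℝ => 2 * Δ * max (x - t) 0) G := hmpG.const_mul _
    rw [integral_add hsqpG hD, harm2p, integral_const_mul, ← hE1G]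
  set g2' : ℝ → ℝ := fun x => (-x - (t + Δ)) ^ 2 + 2 * Δ * max (-x - t) 0 with hg2'def
  have hg2'm : Measurable g2' :=
    ((measurable_id'.neg.sub_const _).pow_const 2).add (hmn.const_mul _)
  have hg2'G : Integrable g2' G := hsqnG.add (hmnG.const_mul _)
  have hg2'P : Integrable (fun ω => g2' (ε ω)) P := hcomp hg2'm hg2'G
  have hg2'nn : ∀ x, 0 ≤ g2' x := by
    intro x
    have h1 := sq_nonneg (-x - (t + Δ))
    have h2 : 0 ≤ 2 * Δ * max (-x - t) 0 :=
      mul_nonneg (by linarith) (le_max_right _ _)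
    simp only [hg2'def]
    linarith
  have hIg2' : ∫ ω, g2' (ε ω) ∂P = (σ ^ 2 + (t + Δ) ^ 2) + 2 * Δ * E1 := by
    rw [hieq hg2'm]
    simp only [hg2'def]
    have hD : Integrable (fun x : ℝ => 2 * Δ * max (-x - t) 0) G := hmnG.const_mul _
    rw [integral_add hsqnG hD, harm2n, integral_const_mul, hmn1]
  -- pointwise bounds
  have hsetup : ∀ ω ∈ Ω₀, zhat ω = μ + ε ω + (zhat ω - z ω) ∧ that ω = t + (that ω - t) ∧
      |zhat ω - z ω| + |that ω - t| ≤ Δ ∧ |zhat ω - z ω| < that ω - t := by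
    intro ω hω
    have hzω : z ω = μ + ε ω := by rw [hz]
    refine ⟨by linarith, by ring, hbound ω hω, ?_⟩
    have h := hthr ω hω
    linarith
  have hpt1 : ∀ ω ∈ Ω₀, (softThreshold (that ω) (zhat ω) - μ) ^ 2 ≤ g1 (ε ω) := by
    intro ω hω
    obtain ⟨h1, h2, h3, h4⟩ := hsetup ω hω
    have h := ptwise1 μ (ε ω) (zhat ω - z ω) (that ω - t) t Δ ht h3 h4
    rw [← h1, ← h2] at h
    exact h
  have hf0m : Measurable (fun ω => (softThreshold (that ω) (zhat ω) - μ) ^ 2) := by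
    have h1 : Measurable (fun ω => softThreshold (that ω) (zhat ω)) :=
      (measurable_realSign.comp hzhat).mul ((hzhat.abs.sub hthat).max measurable_const)
    exact (h1.sub_const μ).pow_const 2
  have hf0Ω : IntegrableOn (fun ω => (softThreshold (that ω) (zhat ω) - μ) ^ 2) Ω₀ P := by
    refine Integrable.mono' hg1P.integrableOn hf0m.aestronglyMeasurable.restrict ?_
    filter_upwards [ae_restrict_mem hΩ₀] with ω hω
    rw [Real.norm_eq_abs, abs_of_nonneg (sq_nonneg _)]
    exact hpt1 ω hω
  have hI1 : (∫ ω in Ω₀, (softThreshold (that ω) (zhat ω) - μ) ^ 2 ∂P)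
      ≤ μ ^ 2 + 2 * E2 + 2 * Δ ^ 2 * Q := by
    calc (∫ ω in Ω₀, (softThreshold (that ω) (zhat ω) - μ) ^ 2 ∂P)
        ≤ ∫ ω in Ω₀, g1 (ε ω) ∂P :=
          setIntegral_mono_on hf0Ω hg1P.integrableOn hΩ₀ hpt1
    _ ≤ ∫ ω, g1 (ε ω) ∂P := setIntegral_le_integral hg1P (ae_of_all _ fun ω => hg1nn _)
    _ = _ := hIg1
  have hI2 : (∫ ω in Ω₀, (softThreshold (that ω) (zhat ω) - μ) ^ 2 ∂P)
      ≤ (σ ^ 2 + (t + Δ) ^ 2) + 2 * Δ * E1 := by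
    rcases le_or_gt 0 μ with hμ | hμ
    · have hpt2 : ∀ ω ∈ Ω₀, (softThreshold (that ω) (zhat ω) - μ) ^ 2 ≤ g2 (ε ω) := by
        intro ω hω
        obtain ⟨h1, h2, h3, h4⟩ := hsetup ω hω
        have h := ptwise2 μ (ε ω) (zhat ω - z ω) (that ω - t) t Δ ht hμ h3 h4
        rw [← h1, ← h2] at h
        exact h
      calc (∫ ω in Ω₀, (softThreshold (that ω) (zhat ω) - μ) ^ 2 ∂P)
          ≤ ∫ ω in Ω₀, g2 (ε ω) ∂P :=
            setIntegral_mono_on hf0Ω hg2P.integrableOn hΩ₀ hpt2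
      _ ≤ ∫ ω, g2 (ε ω) ∂P := setIntegral_le_integral hg2P (ae_of_all _ fun ω => hg2nn _)
      _ = _ := hIg2
    · have hpt2 : ∀ ω ∈ Ω₀, (softThreshold (that ω) (zhat ω) - μ) ^ 2 ≤ g2' (ε ω) := by
        intro ω hω
        obtain ⟨h1, h2, h3, h4⟩ := hsetup ω hω
        have h := ptwise2 (-μ) (-ε ω) (-(zhat ω - z ω)) (that ω - t) t Δ ht (by linarith)
          (by rw [abs_neg]; exact h3) (by rw [abs_neg]; exact h4)
        rw [show -μ + -ε ω + -(zhat ω - z ω) = -(μ + ε ω + (zhat ω - z ω)) from by ring,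
          softThreshold_neg,
          show ∀ a : ℝ, -a - -μ = -(a - μ) from fun a => by ring, neg_sq, ← h1, ← h2] at h
        exact h
      calc (∫ ω in Ω₀, (softThreshold (that ω) (zhat ω) - μ) ^ 2 ∂P)
          ≤ ∫ ω in Ω₀, g2' (ε ω) ∂P :=
            setIntegral_mono_on hf0Ω hg2'P.integrableOn hΩ₀ hpt2
      _ ≤ ∫ ω, g2' (ε ω) ∂P := setIntegral_le_integral hg2'P (ae_of_all _ fun ω => hg2'nn _)
      _ = _ := hIg2'
  -- tail bounds
  have hφ : σ ^ 2 * gp σ t = σ * stdNormalPdf (t / σ) := sigma_phi hσ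
  have hφnn : 0 ≤ stdNormalPdf (t / σ) := by unfold stdNormalPdf; positivity
  set φv := stdNormalPdf (t / σ) with hφdef
  have hQb : Q ≤ σ * φv / t := by
    rw [hQI]
    calc ∫ x in Ioi t, gp σ x ≤ σ ^ 2 * gp σ t / t := R1 hσ ht
    _ = σ * φv / t := by rw [hφ]
  have hE1b : E1 ≤ σ ^ 3 * φv / t ^ 2 := by
    rw [hE1I]
    calc ∫ x in Ioi t, (x - t) * gp σ x
        ≤ (σ ^ 2 / t) * ∫ x in Ioi t, gp σ x := R2 hσ ht
    _ ≤ (σ ^ 2 / t) * (σ * φv / t) := by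
        refine mul_le_mul_of_nonneg_left ?_ (by positivity)
        rw [← hQI]; exact hQb
    _ = σ ^ 3 * φv / t ^ 2 := by field_simp
  have hE2b : E2 ≤ 2 * σ ^ 5 * φv / t ^ 3 := by
    rw [hE2I]
    calc ∫ x in Ioi t, (x - t) ^ 2 * gp σ x
        ≤ (2 * σ ^ 2 / t) * ∫ x in Ioi t, (x - t) * gp σ x := R3 hσ ht
    _ ≤ (2 * σ ^ 2 / t) * (σ ^ 3 * φv / t ^ 2) := by
        refine mul_le_mul_of_nonneg_left ?_ (by positivity)
        rw [← hE1I]; exact hE1b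
    _ = 2 * σ ^ 5 * φv / t ^ 3 := by field_simp
  constructor
  · have h := le_min (hI1.trans (arith1 E1 E2 Q Δ μ hΔ0 hE1nn hQnn))
      (hI2.trans (arith2 E1 Q Δ (σ ^ 2 + (t + Δ) ^ 2) hΔ0 hQnn))
    rwa [min_add_add_right] at h
  · exact arith3 E1 E2 Q Δ μ B φv σ t hΔ0 hE2nn hQb hE1b hE2b
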